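/- The infinite dihedral group D_∞ has property R_∞: for every automorphism φ of D_∞, there are infinitely many φ-twisted conjugacy classes. -/

import Mathlib

open DihedralGroup

private lemma zmod0_add (a b : ZMod 0) : a + b = (show ℤ from a) + (show ℤ from b) := rfl
private lemma zmod0_neg (a : ZMod 0) : -a = -(show ℤ from a) := rfl
private lemma zmod0_sub (a b : ZMod 0) : a - b = (show ℤ from a) - (show ℤ from b) := rfl

private lemma r_inv_eq (i : ZMod 0) : (r i : DihedralGroup 0)⁻¹ = r (-i) := rfl
private lemma sr_inv_eq (i : ZMod 0) : (sr i : DihedralGroup 0)⁻¹ = sr i := rfl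

private lemma r_zpow (m : ℤ) : (r 1 : DihedralGroup 0) ^ m = r m := by
  induction m using Int.induction_on with
  | zero => rfl
  | succ k ih => rw [zpow_add, zpow_one, ih]; rfl
  | pred k ih => rw [sub_eq_add_neg, zpow_add, ih, zpow_neg, zpow_one, r_inv_eq]; rfl

private lemma phi_r_one (φ : DihedralGroup 0 ≃* DihedralGroup 0) :
    ∃ u : ℤ, φ (r 1) = r u := by
  rcases h : φ (r 1) with u | j
  · exact ⟨u, rfl⟩
  · exfalso
    have h2 : φ (r 2) = 1 := by
      have : (r 2 : DihedralGroup 0) = r 1 * r 1 := rfl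
      rw [this, map_mul, h, sr_mul_sr, sub_self, ← one_def]
    have h3 : (r 2 : DihedralGroup 0) = 1 := φ.injective (by rw [h2, map_one])
    rw [one_def] at h3
    exact two_ne_zero (r.inj h3)

private lemma phi_sr_zero (φ : DihedralGroup 0 ≃* DihedralGroup 0) :
    ∃ k : ℤ, φ (sr 0) = sr k := by
  rcases h : φ (sr 0) with j | k
  · exfalso
    have h2 : φ (sr 0) * φ (sr 0) = 1 := by
      rw [← map_mul, sr_mul_sr, sub_self, ← one_def, map_one]
    rw [h, r_mul_r, one_def] at h2
    have hj : j + j = 0 := r.inj h2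
    have hj0 : j = 0 := by
      have h4 : (show ℤ from j) + (show ℤ from j) = 0 := hj
      have : (show ℤ from j) = 0 := by omega
      exact this
    have h5 : φ (sr 0) = φ 1 := by rw [h, hj0, map_one, one_def]
    have h6 := φ.injective h5
    simp [one_def, -r_zero] at h6
  · exact ⟨k, rfl⟩

private lemma phi_forms (φ : DihedralGroup 0 ≃* DihedralGroup 0) :
    ∃ u k : ℤ, (u = 1 ∨ u = -1) ∧
      (∀ n : ZMod 0, φ (r n) = r (u * (show ℤ from n))) ∧
      (∀ n : ZMod 0, φ (sr n) = sr (k + u * (show ℤ from n))) := by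
  obtain ⟨u, hu⟩ := phi_r_one φ
  obtain ⟨v, hv⟩ := phi_r_one φ.symm
  obtain ⟨k, hk⟩ := phi_sr_zero φ
  have hrn : ∀ n : ZMod 0, φ (r n) = r (u * (show ℤ from n)) := by
    intro n
    have h1 : (r n : DihedralGroup 0) = r 1 ^ (show ℤ from n) := (_root_.r_zpow _).symm
    rw [h1, map_zpow, hu, ← _root_.r_zpow u, ← zpow_mul, _root_.r_zpow]
  have huv : u * v = 1 := by
    have h1 : φ (r v) = r (u * v) := hrn v
    rw [← hv, MulEquiv.apply_symm_apply] at h1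
    have := r.inj h1
    have h2 : (1 : ℤ) = u * v := this
    omega
  have hu1 : u = 1 ∨ u = -1 := Int.isUnit_iff.mp (IsUnit.of_mul_eq_one v huv)
  refine ⟨u, k, hu1, hrn, fun n => ?_⟩
  have h1 : (sr n : DihedralGroup 0) = sr 0 * r n := by rw [sr_mul_r, zero_add]
  rw [h1, map_mul, hk, hrn]
  rfl

private def f1 (k : ℤ) : DihedralGroup 0 → ℕ
  | .r i => (2 * (show ℤ from i) + k).natAbs
  | .sr _ => 0

private def f2 (k : ℤ) : DihedralGroup 0 → ℕ
  | .r _ => 0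
  | .sr i => (2 * (show ℤ from i) - k).natAbs

private lemma f1_invariant (φ : DihedralGroup 0 ≃* DihedralGroup 0) (k : ℤ)
    (hr : ∀ n : ZMod 0, φ (r n) = r n)
    (hsr : ∀ n : ZMod 0, φ (sr n) = sr (k + (show ℤ from n))) :
    ∀ a b : DihedralGroup 0, (∃ w, φ w * a * w⁻¹ = b) → f1 k a = f1 k b := by
  have hsr' : ∀ n : ZMod 0, φ (sr n) = sr (@HAdd.hAdd (ZMod 0) (ZMod 0) (ZMod 0) _ k n) := hsr
  rintro a _ ⟨w, rfl⟩
  rcases a with n | n <;> rcases w with m | m <;>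
    simp only [hr, hsr', r_inv_eq, sr_inv_eq, r_mul_r, r_mul_sr, sr_mul_r, sr_mul_sr, f1] <;>
    simp only [zmod0_add, zmod0_neg, zmod0_sub] <;> omega

private lemma f2_invariant (φ : DihedralGroup 0 ≃* DihedralGroup 0) (k : ℤ)
    (hr : ∀ n : ZMod 0, φ (r n) = r (-(show ℤ from n)))
    (hsr : ∀ n : ZMod 0, φ (sr n) = sr (k - (show ℤ from n))) :
    ∀ a b : DihedralGroup 0, (∃ w, φ w * a * w⁻¹ = b) → f2 k a = f2 k b := by
  have hr' : ∀ n : ZMod 0, φ (r n) = r (-n) := hr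
  have hsr' : ∀ n : ZMod 0, φ (sr n) = sr (@HSub.hSub (ZMod 0) (ZMod 0) (ZMod 0) _ k n) := hsr
  rintro a _ ⟨w, rfl⟩
  rcases a with n | n <;> rcases w with m | m <;>
    simp only [hr', hsr', r_inv_eq, sr_inv_eq, r_mul_r, r_mul_sr, sr_mul_r, sr_mul_sr, f2] <;>
    simp only [zmod0_add, zmod0_neg, zmod0_sub] <;> omega

/-- The infinite dihedral group (realized as `DihedralGroup 0`) has property `R_∞`:
for every automorphism `φ` there are infinitely many `φ`-twisted conjugacy classes. -/
theorem infinite_dihedral_Rinfty :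
    ∀ φ : DihedralGroup 0 ≃* DihedralGroup 0,
      Infinite (Quot (fun a b : DihedralGroup 0 => ∃ w, φ w * a * w⁻¹ = b)) := by
  intro φ
  obtain ⟨u, k, hu, hrn, hsrn⟩ := phi_forms φ
  set R := fun a b : DihedralGroup 0 => ∃ w, φ w * a * w⁻¹ = b with hR
  rcases hu with hu1 | hu1
  · -- u = 1 : use f1
    have hr : ∀ n : ZMod 0, φ (r n) = r n := by
      intro n; rw [hrn, hu1, one_mul]
    have hsr : ∀ n : ZMod 0, φ (sr n) = sr (k + (show ℤ from n)) := by
      intro n; rw [hsrn, hu1, one_mul]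
    have hinv := f1_invariant φ k hr hsr
    let L : Quot R → ℕ := Quot.lift (f1 k) hinv
    refine Infinite.of_injective
      (fun i : ℕ => Quot.mk R (r (show ZMod 0 from (((k.natAbs : ℤ) + 1 + (i : ℤ) : ℤ))))) (fun i j h => ?_)
    have h2 : L (Quot.mk R (r (show ZMod 0 from (((k.natAbs : ℤ) + 1 + (i : ℤ) : ℤ))))) =
        L (Quot.mk R (r (show ZMod 0 from (((k.natAbs : ℤ) + 1 + (j : ℤ) : ℤ))))) := congrArg L h
    simp only [L, Quot.lift_mk, f1] at h2
    omega
  · -- u = -1 : use f2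
    have hr : ∀ n : ZMod 0, φ (r n) = r (-(show ℤ from n)) := by
      intro n; rw [hrn, hu1, neg_one_mul]
    have hsr : ∀ n : ZMod 0, φ (sr n) = sr (k - (show ℤ from n)) := by
      intro n; rw [hsrn, hu1, neg_one_mul, ← sub_eq_add_neg]
    have hinv := f2_invariant φ k hr hsr
    let L : Quot R → ℕ := Quot.lift (f2 k) hinv
    refine Infinite.of_injective
      (fun i : ℕ => Quot.mk R (sr (show ZMod 0 from (((k.natAbs : ℤ) + 1 + (i : ℤ) : ℤ))))) (fun i j h => ?_)
    have h2 : L (Quot.mk R (sr (show ZMod 0 from (((k.natAbs : ℤ) + 1 + (i : ℤ) : ℤ))))) =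
        L (Quot.mk R (sr (show ZMod 0 from (((k.natAbs : ℤ) + 1 + (j : ℤ) : ℤ))))) := congrArg L h
    simp only [L, Quot.lift_mk, f2] at h2
    omega
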